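/- With the root order on positive roots Δ⁺, if γ₁ = Σ c_{1α} α and γ₂ = Σ c_{2α} α have intersecting supports, then their greatest lower bound in (Δ⁺, ≼) equals Σ_{α∈Π} min(c_{1α}, c_{2α}) α; in particular this coefficientwise minimum is itself a positive root. -/

import Mathlib

open scoped RealInnerProductSpace

/-- Combinatorial data of the set of positive roots of a (reduced, irreducible,
crystallographic) root system of a simple Lie algebra, with a chosen set of
simple roots, sitting in a real inner product space `V`. -/
structure SimpleRS (V : Type*) [NormedAddCommGroup V] [InnerProductSpace ℝ V] where
  /-- the positive roots Δ⁺ -/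
  pos : Finset V
  /-- the simple roots Π -/
  simple : Finset V
  simple_sub : simple ⊆ pos
  indep : LinearIndependent ℝ (fun α : {x // x ∈ simple} => (α : V))
  root_ne : ∀ γ ∈ pos, γ ≠ (0 : V)
  /-- `coeff γ α` is the coefficient of the simple root `α` in `γ` -/
  coeff : V → V → ℕ
  coeff_spec : ∀ γ ∈ pos, γ = ∑ α ∈ simple, (coeff γ α : ℝ) • α
  /-- the reflection of a root in a root is again a root (positive or negative) -/
  reflect_mem : ∀ α ∈ pos, ∀ γ ∈ pos,
    (γ - (2 * ⟪γ, α⟫ / ⟪α, α⟫) • α ∈ pos ∨ -(γ - (2 * ⟪γ, α⟫ / ⟪α, α⟫) • α) ∈ pos)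
  crystallographic : ∀ α ∈ pos, ∀ γ ∈ pos, ∃ z : ℤ, 2 * ⟪γ, α⟫ / ⟪α, α⟫ = (z : ℝ)
  reduced : ∀ α ∈ pos, (2 : ℝ) • α ∉ pos
  /-- irreducibility: the Dynkin diagram is connected -/
  irreducible : ∀ S ⊆ simple, (∀ α ∈ S, ∀ β ∈ simple, β ∉ S → ⟪α, β⟫ = 0) →
      S = ∅ ∨ S = simple
  /-- the highest root θ -/
  highest : V
  highest_mem : highest ∈ pos
  highest_spec : ∀ γ ∈ pos, ∃ c : V → ℕ, highest - γ = ∑ α ∈ simple, (c α : ℝ) • α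

namespace SimpleRS

variable {V : Type*} [NormedAddCommGroup V] [InnerProductSpace ℝ V] (R : SimpleRS V)

/-- the root order: `μ ≼ ν` iff `ν − μ` is a nonnegative integral combination
of simple roots -/
def rle (μ ν : V) : Prop := ∃ c : V → ℕ, ν - μ = ∑ α ∈ R.simple, (c α : ℝ) • α

/-- the support of a root: simple roots occurring with nonzero coefficient -/
def supp (γ : V) : Set V := {α | α ∈ R.simple ∧ R.coeff γ α ≠ 0}

/-- the height of a root -/
def ht (γ : V) : ℕ := ∑ α ∈ R.simple, R.coeff γ α

/-- the root system is of type `A_n`: its Dynkin diagram is a simply laced chain -/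
def IsTypeA : Prop :=
  ∃ (n : ℕ) (e : Fin n ≃ {x // x ∈ R.simple}),
    (∀ i j : Fin n, ⟪(e i : V), (e j : V)⟫ ≠ 0 ↔ ((i : ℤ) - (j : ℤ)).natAbs ≤ 1) ∧
    (∀ i j : Fin n, ‖(e i : V)‖ = ‖(e j : V)‖)

/-- all roots have the same length -/
def SimplyLaced : Prop := ∀ α ∈ R.pos, ∀ β ∈ R.pos, ‖α‖ = ‖β‖

/-- a positive root `γ` is commutative if the upper ideal it generates is abelian,
i.e. no two of its elements sum to a root -/
def IsCom (γ : V) : Prop :=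
  ∀ ν₁ ∈ R.pos, ∀ ν₂ ∈ R.pos, R.rle γ ν₁ → R.rle γ ν₂ →
    ν₁ + ν₂ ∉ R.pos ∧ -(ν₁ + ν₂) ∉ R.pos

/-- the coefficientwise floor `⌊θ/2⌋` of half the highest root -/
def floorTheta : V := ∑ α ∈ R.simple, ((R.coeff R.highest α / 2 : ℕ) : ℝ) • α

end SimpleRS

namespace SimpleRS

attribute [local instance] Classical.propDecidable

variable {V : Type*} [NormedAddCommGroup V] [InnerProductSpace ℝ V] (R : SimpleRS V)

lemma ipos {x : V} (hx : x ≠ 0) : (0:ℝ) < ⟪x, x⟫ := by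
  by_contra h
  push_neg at h
  exact hx (real_inner_self_nonpos.mp h)

lemma sum_zero {f : V → ℝ} (h : ∑ α ∈ R.simple, f α • α = 0) :
    ∀ α ∈ R.simple, f α = 0 := by
  intro α hα
  have h0 : ∑ i : {x // x ∈ R.simple}, f (i : V) • (i : V) = 0 := by
    rw [Finset.sum_coe_sort R.simple (fun x => f x • x)]; exact h
  exact linearIndependent_iff'.mp R.indep Finset.univ (fun i => f (i : V)) h0 ⟨α, hα⟩
    (Finset.mem_univ _)

lemma sum_eq {f g : V → ℝ}
    (h : ∑ α ∈ R.simple, f α • α = ∑ α ∈ R.simple, g α • α) :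
    ∀ α ∈ R.simple, f α = g α := by
  intro α hα
  have h' : ∑ α ∈ R.simple, (f α - g α) • α = 0 := by
    simp only [sub_smul, Finset.sum_sub_distrib, h, sub_self]
  have := R.sum_zero h' α hα
  linarith

lemma coeff_eq {γ : V} (hγ : γ ∈ R.pos) {f : V → ℝ}
    (h : γ = ∑ α ∈ R.simple, f α • α) :
    ∀ α ∈ R.simple, (R.coeff γ α : ℝ) = f α := by
  apply R.sum_eq
  rw [← R.coeff_spec γ hγ, ← h]

lemma ind_sum {α : V} (hα : α ∈ R.simple) (t : ℝ) :
    ∑ β ∈ R.simple, (if β = α then t else 0) • β = t • α := by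
  rw [Finset.sum_eq_single α]
  · simp
  · intro b _ hb; simp [hb]
  · intro h; exact absurd hα h

lemma simple_inner_nonpos {α β : V} (hα : α ∈ R.simple) (hβ : β ∈ R.simple)
    (hne : α ≠ β) : ⟪α, β⟫ ≤ 0 := by
  by_contra hip
  push_neg at hip
  have hαp := R.simple_sub hα
  have hβp := R.simple_sub hβ
  obtain ⟨z, hz⟩ := R.crystallographic β hβp α hαp
  have hβ0 : (0:ℝ) < ⟪β, β⟫ := ipos (R.root_ne β hβp)
  have hzpos : (0:ℝ) < z := by
    rw [← hz]; apply div_pos (by linarith) hβ0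
  have hz1 : (1:ℝ) ≤ (z:ℝ) := by exact_mod_cast (by exact_mod_cast hzpos : (0:ℤ) < z)
  rcases R.reflect_mem β hβp α hαp with hm | hm
  · rw [hz] at hm
    have hexp : α - (z:ℝ) • β =
        ∑ δ ∈ R.simple, ((if δ = α then (1:ℝ) else 0) - (if δ = β then (z:ℝ) else 0)) • δ := by
      simp only [sub_smul, Finset.sum_sub_distrib, R.ind_sum hα (1:ℝ), R.ind_sum hβ (z:ℝ),
        one_smul]
    have hco := R.coeff_eq hm hexp β hβ
    rw [if_neg (fun h => hne h.symm), if_pos rfl] at hco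
    have := Nat.cast_nonneg (α := ℝ) (R.coeff (α - (z:ℝ) • β) β)
    linarith
  · rw [hz, neg_sub] at hm
    have hexp : (z:ℝ) • β - α =
        ∑ δ ∈ R.simple, ((if δ = β then (z:ℝ) else 0) - (if δ = α then (1:ℝ) else 0)) • δ := by
      simp only [sub_smul, Finset.sum_sub_distrib, R.ind_sum hα (1:ℝ), R.ind_sum hβ (z:ℝ),
        one_smul]
    have hco := R.coeff_eq hm hexp α hα
    rw [if_neg hne, if_pos rfl] at hco
    have := Nat.cast_nonneg (α := ℝ) (R.coeff ((z:ℝ) • β - α) α)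
    linarith

lemma diff_mem {x y : V} (hx : x ∈ R.pos) (hy : y ∈ R.pos) (hip : 0 < ⟪x, y⟫)
    (hnp : ∀ t : ℝ, x ≠ t • y) : x - y ∈ R.pos ∨ y - x ∈ R.pos := by
  obtain ⟨z1, hz1⟩ := R.crystallographic y hy x hx
  obtain ⟨z2, hz2⟩ := R.crystallographic x hx y hy
  have hxx : (0:ℝ) < ⟪x, x⟫ := ipos (R.root_ne x hx)
  have hyy : (0:ℝ) < ⟪y, y⟫ := ipos (R.root_ne y hy)
  have hyx : ⟪y, x⟫ = ⟪x, y⟫ := real_inner_comm x y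
  have hz1p : (1:ℤ) ≤ z1 := by
    have : (0:ℝ) < z1 := by rw [← hz1]; apply div_pos (by linarith) hyy
    exact_mod_cast this
  have hz2p : (1:ℤ) ≤ z2 := by
    have : (0:ℝ) < z2 := by rw [← hz2, hyx]; apply div_pos (by linarith) hxx
    exact_mod_cast this
  have key : z1 = 1 ∨ z2 = 1 := by
    by_contra hk
    push_neg at hk
    have h12 : (2:ℤ) ≤ z1 := by omega
    have h22 : (2:ℤ) ≤ z2 := by omega
    have hprod : (4:ℝ) ≤ (z1:ℝ) * (z2:ℝ) := by
      exact_mod_cast (by nlinarith : (4:ℤ) ≤ z1 * z2)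
    rw [← hz1, ← hz2, hyx] at hprod
    have hrw : (2 * ⟪x, y⟫ / ⟪y, y⟫) * (2 * ⟪x, y⟫ / ⟪x, x⟫)
        = 4 * (⟪x, y⟫ * ⟪x, y⟫) / (⟪y, y⟫ * ⟪x, x⟫) := by
      field_simp; ring
    rw [hrw] at hprod
    have h4 : 4 * (⟪y, y⟫ * ⟪x, x⟫) ≤ 4 * (⟪x, y⟫ * ⟪x, y⟫) := by
      have := (le_div_iff₀ (mul_pos hyy hxx)).mp hprod
      linarith
    have hCS : ⟪x, y⟫ * ⟪x, y⟫ ≤ ⟪x, x⟫ * ⟪y, y⟫ := real_inner_mul_inner_self_le x y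
    have heq : ⟪x, y⟫ * ⟪x, y⟫ = ⟪x, x⟫ * ⟪y, y⟫ := by nlinarith
    have hv : ⟪y, y⟫ • x - ⟪x, y⟫ • y = 0 := by
      have hvv : ⟪⟪y, y⟫ • x - ⟪x, y⟫ • y, ⟪y, y⟫ • x - ⟪x, y⟫ • y⟫ = 0 := by
        simp only [inner_sub_left, inner_sub_right, real_inner_smul_left,
          real_inner_smul_right, hyx]
        nlinarith [heq]
      exact inner_self_eq_zero.mp hvv
    have hxeq : x = (⟪x, y⟫ / ⟪y, y⟫) • y := by
      have h1 : ⟪y, y⟫ • x = ⟪x, y⟫ • y := sub_eq_zero.mp hv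
      have h2 : (⟪y, y⟫)⁻¹ • (⟪y, y⟫ • x) = (⟪y, y⟫)⁻¹ • (⟪x, y⟫ • y) := by rw [h1]
      rw [smul_smul, smul_smul, inv_mul_cancel₀ (ne_of_gt hyy), one_smul] at h2
      rw [div_eq_inv_mul]; exact h2
    exact hnp _ hxeq
  rcases key with h | h
  · have hr := R.reflect_mem y hy x hx
    rw [hz1, h] at hr
    push_cast at hr
    rw [one_smul] at hr
    rcases hr with h' | h'
    · exact Or.inl h'
    · rw [neg_sub] at h'; exact Or.inr h'
  · have hr := R.reflect_mem x hx y hy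
    rw [hz2, h] at hr
    push_cast at hr
    rw [one_smul] at hr
    rcases hr with h' | h'
    · exact Or.inr h'
    · rw [neg_sub] at h'; exact Or.inl h'

lemma not_sub_simple {γ α : V} (hγ : γ ∈ R.pos) (hα : α ∈ R.simple) (hne : γ ≠ α) :
    α - γ ∉ R.pos := by
  intro hmem
  have hsum : ∑ β ∈ R.simple, ((R.coeff (α - γ) β : ℝ) + (R.coeff γ β : ℝ)) • β
      = ∑ β ∈ R.simple, (if β = α then (1:ℝ) else 0) • β := by
    simp only [add_smul, Finset.sum_add_distrib, ← R.coeff_spec _ hmem, ← R.coeff_spec _ hγ,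
      R.ind_sum hα (1:ℝ), one_smul]
    abel
  have hco := R.sum_eq hsum
  have hzero : ∀ β ∈ R.simple, β ≠ α → R.coeff γ β = 0 := by
    intro β hβ hbne
    have h := hco β hβ
    rw [if_neg hbne] at h
    have h1 : (0:ℝ) ≤ (R.coeff (α - γ) β : ℝ) := Nat.cast_nonneg _
    have h2 : (0:ℝ) ≤ (R.coeff γ β : ℝ) := Nat.cast_nonneg _
    have : (R.coeff γ β : ℝ) = 0 := by linarith
    exact_mod_cast this
  have hone : R.coeff γ α ≤ 1 := by
    have h := hco α hα
    rw [if_pos rfl] at h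
    have h1 : (0:ℝ) ≤ (R.coeff (α - γ) α : ℝ) := Nat.cast_nonneg _
    have : (R.coeff γ α : ℝ) ≤ 1 := by linarith
    exact_mod_cast this
  have hsum2 : ∑ β ∈ R.simple, (R.coeff γ β : ℝ) • β = (R.coeff γ α : ℝ) • α :=
    Finset.sum_eq_single (f := fun β => (R.coeff γ β : ℝ) • β) α
      (fun b hb hbne => by show (R.coeff γ b : ℝ) • b = 0; rw [hzero b hb hbne]; simp)
      (fun h => absurd hα h)
  have hγeq : γ = (R.coeff γ α : ℝ) • α := (R.coeff_spec γ hγ).trans hsum2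
  have h01 : R.coeff γ α = 0 ∨ R.coeff γ α = 1 := by omega
  rcases h01 with h | h
  · rw [h] at hγeq; simp at hγeq; exact R.root_ne γ hγ hγeq
  · rw [h] at hγeq; simp at hγeq; exact hne hγeq

lemma sub_simple_mem {γ α : V} (hγ : γ ∈ R.pos) (hα : α ∈ R.simple) (hne : γ ≠ α)
    (hip : 0 < ⟪γ, α⟫) : γ - α ∈ R.pos := by
  have hαp := R.simple_sub hα
  have hαα : (0:ℝ) < ⟪α, α⟫ := ipos (R.root_ne α hαp)
  have hnp : ∀ t : ℝ, γ ≠ t • α := by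
    intro t ht
    have hγα : ⟪γ, α⟫ = t * ⟪α, α⟫ := by rw [ht, real_inner_smul_left]
    have htpos : 0 < t := by nlinarith
    have hco : (R.coeff γ α : ℝ) = if α = α then t else 0 :=
      R.coeff_eq hγ (f := fun β => if β = α then t else 0)
        (by rw [R.ind_sum hα t]; exact ht) α hα
    rw [if_pos rfl] at hco
    obtain ⟨z2, hz2⟩ := R.crystallographic γ hγ α hαp
    have hγγ : ⟪γ, γ⟫ = t * t * ⟪α, α⟫ := by
      rw [ht, real_inner_smul_left, real_inner_smul_right]; ring
    have hαγ : ⟪α, γ⟫ = t * ⟪α, α⟫ := by rw [ht, real_inner_smul_right]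
    have hz2v : (z2:ℝ) = 2 / t := by
      rw [← hz2, hαγ, hγγ]
      field_simp
    have hz2pos : (0:ℝ) < z2 := by rw [hz2v]; positivity
    have hz2ge : (1:ℝ) ≤ (z2:ℝ) := by exact_mod_cast (by exact_mod_cast hz2pos : (0:ℤ) < z2)
    have ht2 : t ≤ 2 := by
      rw [hz2v] at hz2ge
      have := (le_div_iff₀ htpos).mp hz2ge
      linarith
    have hc12 : R.coeff γ α = 1 ∨ R.coeff γ α = 2 := by
      have hle : (R.coeff γ α : ℝ) ≤ 2 := by rw [hco]; exact ht2
      have hgt : (0:ℝ) < (R.coeff γ α : ℝ) := by rw [hco]; exact htpos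
      have h1 : R.coeff γ α ≤ 2 := by exact_mod_cast hle
      have h2 : 0 < R.coeff γ α := by exact_mod_cast hgt
      omega
    rcases hc12 with h | h
    · apply hne
      rw [ht, ← hco, h]
      push_cast
      rw [one_smul]
    · apply R.reduced α hαp
      have : γ = (2:ℝ) • α := by rw [ht, ← hco, h]; push_cast; rfl
      rw [← this]; exact hγ
  rcases R.diff_mem hγ hαp hip hnp with h | h
  · exact h
  · exact absurd h (R.not_sub_simple hγ hα hne)

lemma inner_nonpos_of_incomp {γ1 γ2 : V} (h1 : γ1 ∈ R.pos) (h2 : γ2 ∈ R.pos)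
    (ha : ∃ α ∈ R.simple, R.coeff γ2 α < R.coeff γ1 α)
    (hb : ∃ β ∈ R.simple, R.coeff γ1 β < R.coeff γ2 β) : ⟪γ1, γ2⟫ ≤ 0 := by
  by_contra hip
  push_neg at hip
  obtain ⟨α, hα, hαlt⟩ := ha
  obtain ⟨β, hβ, hβlt⟩ := hb
  have hnp : ∀ t : ℝ, γ1 ≠ t • γ2 := by
    intro t ht
    have hco := R.coeff_eq h1 (f := fun δ => t * (R.coeff γ2 δ : ℝ))
      (by rw [ht]
          nth_rewrite 1 [R.coeff_spec γ2 h2]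
          rw [Finset.smul_sum]
          exact Finset.sum_congr rfl fun δ _ => smul_smul t _ δ)
    have eα : (R.coeff γ1 α : ℝ) = t * (R.coeff γ2 α : ℝ) := hco α hα
    have eβ : (R.coeff γ1 β : ℝ) = t * (R.coeff γ2 β : ℝ) := hco β hβ
    have hAlt : (R.coeff γ2 α : ℝ) < (R.coeff γ1 α : ℝ) := by exact_mod_cast hαlt
    have hBlt : (R.coeff γ1 β : ℝ) < (R.coeff γ2 β : ℝ) := by exact_mod_cast hβlt
    have hA2 : (0:ℝ) ≤ (R.coeff γ2 α : ℝ) := Nat.cast_nonneg _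
    have hB2 : (0:ℝ) ≤ (R.coeff γ2 β : ℝ) := Nat.cast_nonneg _
    have ht1 : 1 < t := by nlinarith [eα, hAlt, hA2]
    nlinarith [eβ, hBlt, mul_nonneg (by linarith : (0:ℝ) ≤ t - 1) hB2]
  rcases R.diff_mem h1 h2 hip hnp with h | h
  · have hco := R.coeff_eq h (f := fun δ => (R.coeff γ1 δ : ℝ) - (R.coeff γ2 δ : ℝ))
      (by simp only [sub_smul, Finset.sum_sub_distrib, ← R.coeff_spec _ h1,
            ← R.coeff_spec _ h2]) β hβ
    have hco' : (R.coeff (γ1 - γ2) β : ℝ) = (R.coeff γ1 β : ℝ) - (R.coeff γ2 β : ℝ) := hco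
    have h1' : (0:ℝ) ≤ (R.coeff (γ1 - γ2) β : ℝ) := Nat.cast_nonneg _
    have hBlt : (R.coeff γ1 β : ℝ) < (R.coeff γ2 β : ℝ) := by exact_mod_cast hβlt
    linarith
  · have hco := R.coeff_eq h (f := fun δ => (R.coeff γ2 δ : ℝ) - (R.coeff γ1 δ : ℝ))
      (by simp only [sub_smul, Finset.sum_sub_distrib, ← R.coeff_spec _ h1,
            ← R.coeff_spec _ h2]) α hα
    have hco' : (R.coeff (γ2 - γ1) α : ℝ) = (R.coeff γ2 α : ℝ) - (R.coeff γ1 α : ℝ) := hco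
    have h1' : (0:ℝ) ≤ (R.coeff (γ2 - γ1) α : ℝ) := Nat.cast_nonneg _
    have hAlt : (R.coeff γ2 α : ℝ) < (R.coeff γ1 α : ℝ) := by exact_mod_cast hαlt
    linarith

lemma pivot {γ1 γ2 : V} (h1 : γ1 ∈ R.pos) (h2 : γ2 ∈ R.pos)
    (ha : ∃ α ∈ R.simple, R.coeff γ2 α < R.coeff γ1 α)
    (hb : ∃ β ∈ R.simple, R.coeff γ1 β < R.coeff γ2 β)
    (hs : ∃ δ ∈ R.simple, 0 < min (R.coeff γ1 δ) (R.coeff γ2 δ)) :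
    (∃ α ∈ R.simple, R.coeff γ2 α < R.coeff γ1 α ∧ 0 < ⟪γ1, α⟫) ∨
    (∃ β ∈ R.simple, R.coeff γ1 β < R.coeff γ2 β ∧ 0 < ⟪γ2, β⟫) := by
  by_contra hcon
  push_neg at hcon
  obtain ⟨hc1, hc2⟩ := hcon
  set m : V → ℕ := fun δ => min (R.coeff γ1 δ) (R.coeff γ2 δ) with hm
  set μv : V := ∑ δ ∈ R.simple, (m δ : ℝ) • δ with hμ
  have hexp1 : γ1 - μv = ∑ δ ∈ R.simple, ((R.coeff γ1 δ : ℝ) - (m δ : ℝ)) • δ := by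
    rw [hμ]
    nth_rewrite 1 [R.coeff_spec γ1 h1]
    rw [← Finset.sum_sub_distrib]
    exact Finset.sum_congr rfl fun δ _ => (sub_smul _ _ _).symm
  have hexp2 : γ2 - μv = ∑ δ ∈ R.simple, ((R.coeff γ2 δ : ℝ) - (m δ : ℝ)) • δ := by
    rw [hμ]
    nth_rewrite 1 [R.coeff_spec γ2 h2]
    rw [← Finset.sum_sub_distrib]
    exact Finset.sum_congr rfl fun δ _ => (sub_smul _ _ _).symm
  have hP : ∀ δ, (0:ℝ) ≤ (R.coeff γ1 δ : ℝ) - (m δ : ℝ) := by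
    intro δ
    have : m δ ≤ R.coeff γ1 δ := min_le_left _ _
    have := Nat.cast_le (α := ℝ).mpr this
    linarith
  have hQ : ∀ δ, (0:ℝ) ≤ (R.coeff γ2 δ : ℝ) - (m δ : ℝ) := by
    intro δ
    have : m δ ≤ R.coeff γ2 δ := min_le_right _ _
    have := Nat.cast_le (α := ℝ).mpr this
    linarith
  have S1 : ⟪γ1, γ1 - μv⟫ ≤ 0 := by
    rw [hexp1, inner_sum]
    apply Finset.sum_nonpos
    intro δ hδ
    rw [real_inner_smul_right]
    by_cases hlt : R.coeff γ2 δ < R.coeff γ1 δ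
    · have hip := hc1 δ hδ hlt
      exact mul_nonpos_iff.mpr (Or.inl ⟨hP δ, hip⟩)
    · have : m δ = R.coeff γ1 δ := min_eq_left (le_of_not_gt hlt)
      rw [this]
      simp
  have S2 : ⟪γ2, γ2 - μv⟫ ≤ 0 := by
    rw [hexp2, inner_sum]
    apply Finset.sum_nonpos
    intro δ hδ
    rw [real_inner_smul_right]
    by_cases hlt : R.coeff γ1 δ < R.coeff γ2 δ
    · have hip := hc2 δ hδ hlt
      exact mul_nonpos_iff.mpr (Or.inl ⟨hQ δ, hip⟩)
    · have : m δ = R.coeff γ2 δ := min_eq_right (le_of_not_gt hlt)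
      rw [this]
      simp
  have S3 : ⟪γ1 - μv, γ2 - μv⟫ ≤ 0 := by
    rw [hexp1, hexp2, sum_inner]
    apply Finset.sum_nonpos
    intro δ hδ
    rw [real_inner_smul_left, inner_sum, Finset.mul_sum]
    apply Finset.sum_nonpos
    intro ε hε
    rw [real_inner_smul_right]
    by_cases hde : δ = ε
    · subst hde
      rcases le_total (R.coeff γ1 δ) (R.coeff γ2 δ) with hle | hle
      · rw [show m δ = R.coeff γ1 δ from min_eq_left hle]
        simp
      · rw [show m δ = R.coeff γ2 δ from min_eq_right hle]
        simp
    · have hst := R.simple_inner_nonpos hδ hε hde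
      have := mul_nonneg (hP δ) (hQ ε)
      nlinarith
  have hρ : γ1 + (γ2 - μv) ≠ 0 := by
    intro h0
    obtain ⟨δ0, hδ0, hδ0pos⟩ := hs
    have hzexp : ∑ δ ∈ R.simple, ((R.coeff γ1 δ : ℝ) + ((R.coeff γ2 δ : ℝ) - (m δ : ℝ))) • δ
        = 0 := by
      rw [← h0, hexp2]
      nth_rewrite 2 [R.coeff_spec γ1 h1]
      rw [← Finset.sum_add_distrib]
      exact Finset.sum_congr rfl fun δ _ => add_smul _ _ _
    have := R.sum_zero hzexp δ0 hδ0
    have hm0 : (1:ℝ) ≤ (m δ0 : ℝ) := by exact_mod_cast hδ0pos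
    have hc10 : (m δ0 : ℝ) ≤ (R.coeff γ1 δ0 : ℝ) := by
      exact_mod_cast Nat.cast_le.mpr (min_le_left _ _)
    have := hQ δ0
    linarith [R.sum_zero hzexp δ0 hδ0]
  have hρpos : (0:ℝ) < ⟪γ1 + (γ2 - μv), γ1 + (γ2 - μv)⟫ := ipos hρ
  have hid : ⟪γ1, γ2⟫ = ⟪γ1 + (γ2 - μv), γ1 + (γ2 - μv)⟫
      - ⟪γ1, γ1 - μv⟫ - ⟪γ2, γ2 - μv⟫ - ⟪γ1 - μv, γ2 - μv⟫ := by
    simp only [inner_add_left, inner_add_right, inner_sub_left, inner_sub_right]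
    linarith [real_inner_comm γ1 γ2, real_inner_comm γ1 μv, real_inner_comm γ2 μv]
  have hfinal : (0:ℝ) < ⟪γ1, γ2⟫ := by rw [hid]; linarith
  have := R.inner_nonpos_of_incomp h1 h2 ha hb
  linarith

lemma step {γ1 γ2 α : V} (h1 : γ1 ∈ R.pos) (h2 : γ2 ∈ R.pos) (hα : α ∈ R.simple)
    (hlt : R.coeff γ2 α < R.coeff γ1 α) (hip : 0 < ⟪γ1, α⟫)
    (hs : ∃ δ ∈ R.simple, 0 < min (R.coeff γ1 δ) (R.coeff γ2 δ)) :
    γ1 - α ∈ R.pos ∧ R.ht (γ1 - α) + 1 = R.ht γ1 ∧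
      ∀ β ∈ R.simple, min (R.coeff (γ1 - α) β) (R.coeff γ2 β)
        = min (R.coeff γ1 β) (R.coeff γ2 β) := by
  obtain ⟨δ0, hδ0, hδ0pos⟩ := hs
  have hne : γ1 ≠ α := by
    intro h
    have hco := R.coeff_eq h1 (f := fun β => if β = α then (1:ℝ) else 0)
      (by rw [R.ind_sum hα 1, one_smul]; exact h)
    have h1δ : 0 < R.coeff γ1 δ0 := lt_of_lt_of_le hδ0pos (min_le_left _ _)
    have h2δ : 0 < R.coeff γ2 δ0 := lt_of_lt_of_le hδ0pos (min_le_right _ _)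
    have hcδ : (R.coeff γ1 δ0 : ℝ) = if δ0 = α then (1:ℝ) else 0 := hco δ0 hδ0
    by_cases hd : δ0 = α
    · subst hd
      rw [if_pos rfl] at hcδ
      have : R.coeff γ1 δ0 = 1 := by exact_mod_cast hcδ
      omega
    · rw [if_neg hd] at hcδ
      have : R.coeff γ1 δ0 = 0 := by exact_mod_cast hcδ
      omega
  have hmem : γ1 - α ∈ R.pos := R.sub_simple_mem h1 hα hne hip
  have h1p : 1 ≤ R.coeff γ1 α := by omega
  have hid : ∑ β ∈ R.simple, ((R.coeff γ1 β : ℝ) - (if β = α then (1:ℝ) else 0)) • β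
      = γ1 - α := by
    calc ∑ β ∈ R.simple, ((R.coeff γ1 β : ℝ) - (if β = α then (1:ℝ) else 0)) • β
        = ∑ β ∈ R.simple,
            ((R.coeff γ1 β : ℝ) • β - (if β = α then (1:ℝ) else 0) • β) :=
          Finset.sum_congr rfl fun β _ => sub_smul _ _ β
      _ = (∑ β ∈ R.simple, (R.coeff γ1 β : ℝ) • β)
            - ∑ β ∈ R.simple, (if β = α then (1:ℝ) else 0) • β := Finset.sum_sub_distrib _ _
      _ = γ1 - α := by rw [← R.coeff_spec γ1 h1, R.ind_sum hα 1, one_smul]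
  have hco := R.coeff_eq hmem hid.symm
  have hcα : R.coeff (γ1 - α) α = R.coeff γ1 α - 1 := by
    have hr : (R.coeff (γ1 - α) α : ℝ) = (R.coeff γ1 α : ℝ) - (if α = α then (1:ℝ) else 0) :=
      hco α hα
    rw [if_pos rfl] at hr
    have hc : ((R.coeff γ1 α - 1 : ℕ) : ℝ) = (R.coeff γ1 α : ℝ) - 1 := by
      rw [Nat.cast_sub h1p]; norm_num
    exact_mod_cast hr.trans hc.symm
  have hcβ : ∀ β ∈ R.simple, β ≠ α → R.coeff (γ1 - α) β = R.coeff γ1 β := by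
    intro β hβ hne'
    have hr : (R.coeff (γ1 - α) β : ℝ) = (R.coeff γ1 β : ℝ) - (if β = α then (1:ℝ) else 0) :=
      hco β hβ
    rw [if_neg hne', sub_zero] at hr
    exact_mod_cast hr
  refine ⟨hmem, ?_, ?_⟩
  · show (∑ β ∈ R.simple, R.coeff (γ1 - α) β) + 1 = ∑ β ∈ R.simple, R.coeff γ1 β
    rw [← Finset.sum_erase_add R.simple _ hα, ← Finset.sum_erase_add R.simple (R.coeff γ1) hα]
    have he : ∑ β ∈ R.simple.erase α, R.coeff (γ1 - α) β
        = ∑ β ∈ R.simple.erase α, R.coeff γ1 β :=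
      Finset.sum_congr rfl fun β hβ =>
        hcβ β (Finset.mem_of_mem_erase hβ) (Finset.ne_of_mem_erase hβ)
    rw [he, hcα]
    omega
  · intro β hβ
    by_cases hd : β = α
    · subst hd
      rw [hcα]
      omega
    · rw [hcβ β hβ hd]

lemma min_mem : ∀ (n : ℕ) (γ1 γ2 : V), γ1 ∈ R.pos → γ2 ∈ R.pos →
    R.ht γ1 + R.ht γ2 ≤ n →
    (∃ δ ∈ R.simple, 0 < min (R.coeff γ1 δ) (R.coeff γ2 δ)) →
    (∑ α ∈ R.simple, ((min (R.coeff γ1 α) (R.coeff γ2 α) : ℕ) : ℝ) • α) ∈ R.pos := by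
  intro n
  induction n with
  | zero =>
    intro γ1 γ2 h1 h2 hn hs
    exfalso
    obtain ⟨δ0, hδ0, hp⟩ := hs
    have h0 : 0 < R.coeff γ1 δ0 := lt_of_lt_of_le hp (min_le_left _ _)
    have hle := Finset.single_le_sum (f := fun a => R.coeff γ1 a) (fun i _ => Nat.zero_le _) hδ0
    have hht : 0 < R.ht γ1 := h0.trans_le hle
    omega
  | succ n ih =>
    intro γ1 γ2 h1 h2 hn hs
    by_cases hc1 : ∀ α ∈ R.simple, R.coeff γ1 α ≤ R.coeff γ2 α
    · have hsum : ∑ α ∈ R.simple, ((min (R.coeff γ1 α) (R.coeff γ2 α) : ℕ) : ℝ) • α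
          = ∑ α ∈ R.simple, (R.coeff γ1 α : ℝ) • α :=
        Finset.sum_congr rfl fun α hα => by rw [min_eq_left (hc1 α hα)]
      rw [hsum, ← R.coeff_spec γ1 h1]
      exact h1
    by_cases hc2 : ∀ α ∈ R.simple, R.coeff γ2 α ≤ R.coeff γ1 α
    · have hsum : ∑ α ∈ R.simple, ((min (R.coeff γ1 α) (R.coeff γ2 α) : ℕ) : ℝ) • α
          = ∑ α ∈ R.simple, (R.coeff γ2 α : ℝ) • α :=
        Finset.sum_congr rfl fun α hα => by rw [min_eq_right (hc2 α hα)]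
      rw [hsum, ← R.coeff_spec γ2 h2]
      exact h2
    push_neg at hc1 hc2
    have ha : ∃ α ∈ R.simple, R.coeff γ2 α < R.coeff γ1 α := by
      obtain ⟨α, hα, h⟩ := hc1; exact ⟨α, hα, h⟩
    have hb : ∃ β ∈ R.simple, R.coeff γ1 β < R.coeff γ2 β := by
      obtain ⟨β, hβ, h⟩ := hc2; exact ⟨β, hβ, h⟩
    rcases R.pivot h1 h2 ha hb hs with ⟨α, hα, hlt, hip⟩ | ⟨β, hβ, hlt, hip⟩
    · obtain ⟨hmem, hht, hminq⟩ := R.step h1 h2 hα hlt hip hs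
      have hsum : ∑ a ∈ R.simple, ((min (R.coeff (γ1 - α) a) (R.coeff γ2 a) : ℕ) : ℝ) • a
          = ∑ a ∈ R.simple, ((min (R.coeff γ1 a) (R.coeff γ2 a) : ℕ) : ℝ) • a :=
        Finset.sum_congr rfl fun a haa => by rw [hminq a haa]
      have hs' : ∃ δ ∈ R.simple, 0 < min (R.coeff (γ1 - α) δ) (R.coeff γ2 δ) := by
        obtain ⟨δ0, hδ0, hp⟩ := hs
        exact ⟨δ0, hδ0, by rw [hminq δ0 hδ0]; exact hp⟩
      have := ih (γ1 - α) γ2 hmem h2 (by omega) hs'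
      rwa [hsum] at this
    · have hs2 : ∃ δ ∈ R.simple, 0 < min (R.coeff γ2 δ) (R.coeff γ1 δ) := by
        obtain ⟨δ0, hδ0, hp⟩ := hs
        exact ⟨δ0, hδ0, by rw [min_comm]; exact hp⟩
      obtain ⟨hmem, hht, hminq⟩ := R.step h2 h1 hβ hlt hip hs2
      have hsum : ∑ a ∈ R.simple, ((min (R.coeff (γ2 - β) a) (R.coeff γ1 a) : ℕ) : ℝ) • a
          = ∑ a ∈ R.simple, ((min (R.coeff γ1 a) (R.coeff γ2 a) : ℕ) : ℝ) • a :=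
        Finset.sum_congr rfl fun a haa => by rw [hminq a haa, min_comm]
      have hs' : ∃ δ ∈ R.simple, 0 < min (R.coeff (γ2 - β) δ) (R.coeff γ1 δ) := by
        obtain ⟨δ0, hδ0, hp⟩ := hs2
        exact ⟨δ0, hδ0, by rw [hminq δ0 hδ0]; exact hp⟩
      have := ih (γ2 - β) γ1 hmem h1 (by omega) hs'
      rwa [hsum] at this

lemma rle_coeff_le {κ γ : V} (hκ : κ ∈ R.pos) (hγ : γ ∈ R.pos) (h : R.rle κ γ) :
    ∀ α ∈ R.simple, R.coeff κ α ≤ R.coeff γ α := by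
  obtain ⟨d, hd⟩ := h
  have hexp : γ = ∑ a ∈ R.simple, ((R.coeff κ a : ℝ) + (d a : ℝ)) • a := by
    have h2 : γ = κ + ∑ a ∈ R.simple, (d a : ℝ) • a := by rw [← hd]; abel
    rw [h2]
    nth_rewrite 1 [R.coeff_spec κ hκ]
    rw [← Finset.sum_add_distrib]
    exact Finset.sum_congr rfl fun a _ => (add_smul _ _ _).symm
  intro α hα
  have h' : (R.coeff γ α : ℝ) = (R.coeff κ α : ℝ) + (d α : ℝ) := R.coeff_eq hγ hexp α hα
  have hd0 : (0:ℝ) ≤ (d α : ℝ) := Nat.cast_nonneg _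
  exact_mod_cast (by linarith : (R.coeff κ α : ℝ) ≤ (R.coeff γ α : ℝ))

lemma sub_sum_rle {γ : V} (hγ : γ ∈ R.pos) (c : V → ℕ) (hc : ∀ α ∈ R.simple, c α ≤ R.coeff γ α) :
    R.rle (∑ α ∈ R.simple, (c α : ℝ) • α) γ := by
  refine ⟨fun α => R.coeff γ α - c α, ?_⟩
  calc γ - ∑ α ∈ R.simple, (c α : ℝ) • α
      = (∑ α ∈ R.simple, (R.coeff γ α : ℝ) • α) - ∑ α ∈ R.simple, (c α : ℝ) • α := by
        rw [← R.coeff_spec γ hγ]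
    _ = ∑ α ∈ R.simple, ((R.coeff γ α : ℝ) - (c α : ℝ)) • α := by
        rw [← Finset.sum_sub_distrib]
        exact Finset.sum_congr rfl fun α _ => (sub_smul _ _ _).symm
    _ = ∑ α ∈ R.simple, ((R.coeff γ α - c α : ℕ) : ℝ) • α :=
        Finset.sum_congr rfl fun α hα => by rw [Nat.cast_sub (hc α hα)]

end SimpleRS
/-- if the supports of `γ₁, γ₂` intersect, then the coefficientwise
minimum `Σ min(c_{1α}, c_{2α}) α` is a positive root and is the greatest lower
bound of `γ₁` and `γ₂` in `(Δ⁺, ≼)`. -/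
theorem stmt3 {V : Type*} [NormedAddCommGroup V] [InnerProductSpace ℝ V]
    (R : SimpleRS V) {γ₁ γ₂ : V} (h1 : γ₁ ∈ R.pos) (h2 : γ₂ ∈ R.pos)
    (hsupp : (R.supp γ₁ ∩ R.supp γ₂).Nonempty) :
    (∑ α ∈ R.simple, ((min (R.coeff γ₁ α) (R.coeff γ₂ α) : ℕ) : ℝ) • α) ∈ R.pos ∧
    R.rle (∑ α ∈ R.simple, ((min (R.coeff γ₁ α) (R.coeff γ₂ α) : ℕ) : ℝ) • α) γ₁ ∧
    R.rle (∑ α ∈ R.simple, ((min (R.coeff γ₁ α) (R.coeff γ₂ α) : ℕ) : ℝ) • α) γ₂ ∧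
    ∀ κ ∈ R.pos, R.rle κ γ₁ → R.rle κ γ₂ →
      R.rle κ (∑ α ∈ R.simple, ((min (R.coeff γ₁ α) (R.coeff γ₂ α) : ℕ) : ℝ) • α) := by
  
  obtain ⟨δ0, hδ0⟩ := hsupp
  simp only [SimpleRS.supp, Set.mem_inter_iff, Set.mem_setOf_eq] at hδ0
  obtain ⟨⟨hδs, hne1⟩, -, hne2⟩ := hδ0
  have hs : ∃ δ ∈ R.simple, 0 < min (R.coeff γ₁ δ) (R.coeff γ₂ δ) :=
    ⟨δ0, hδs, lt_min (Nat.pos_of_ne_zero hne1) (Nat.pos_of_ne_zero hne2)⟩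
  have hmem := R.min_mem (R.ht γ₁ + R.ht γ₂) γ₁ γ₂ h1 h2 le_rfl hs
  refine ⟨hmem, ?_, ?_, ?_⟩
  · exact R.sub_sum_rle h1 _ (fun α _ => min_le_left _ _)
  · exact R.sub_sum_rle h2 _ (fun α _ => min_le_right _ _)
  · intro κ hκ hk1 hk2
    have hle1 := R.rle_coeff_le hκ h1 hk1
    have hle2 := R.rle_coeff_le hκ h2 hk2
    refine ⟨fun α => min (R.coeff γ₁ α) (R.coeff γ₂ α) - R.coeff κ α, ?_⟩
    calc (∑ α ∈ R.simple, ((min (R.coeff γ₁ α) (R.coeff γ₂ α) : ℕ) : ℝ) • α) - κ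
        = (∑ α ∈ R.simple, ((min (R.coeff γ₁ α) (R.coeff γ₂ α) : ℕ) : ℝ) • α)
            - ∑ α ∈ R.simple, (R.coeff κ α : ℝ) • α := by rw [← R.coeff_spec κ hκ]
      _ = ∑ α ∈ R.simple,
            (((min (R.coeff γ₁ α) (R.coeff γ₂ α) : ℕ) : ℝ) - (R.coeff κ α : ℝ)) • α := by
          rw [← Finset.sum_sub_distrib]
          exact Finset.sum_congr rfl fun α _ => (sub_smul _ _ _).symm
      _ = ∑ α ∈ R.simple,
            ((min (R.coeff γ₁ α) (R.coeff γ₂ α) - R.coeff κ α : ℕ) : ℝ) • α :=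
          Finset.sum_congr rfl fun α hα => by
            rw [Nat.cast_sub (le_min (hle1 α hα) (hle2 α hα))]
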